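/- Let η : H → G be an envelope of groups with G nilpotent. Then η : H → G is a localization if and only if the Galois group of η is trivial. -/

import Mathlib

private lemma ucs_comm_mem' {G : Type} [Group G] {n : ℕ} {z : G}
    (hz : z ∈ Subgroup.upperCentralSeries G (n + 1)) (a : G) :
    a * z * a⁻¹ * z⁻¹ ∈ Subgroup.upperCentralSeries G n := by
  have h := mem_upperCentralSeries_succ_iff.mp hz a
  have he : a * z * a⁻¹ * z⁻¹ = (z * a * z⁻¹ * a⁻¹)⁻¹ := by group
  rw [he]
  exact (Subgroup.upperCentralSeries G n).inv_mem h

/-- image of an element of `Z_{i+1}` is central in `G ⧸ Z_i`. -/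
private lemma ucs_quot_central {G : Type} [Group G] {i : ℕ} {z : G}
    (hz : z ∈ Subgroup.upperCentralSeries G (i + 1)) :
    ∀ q : G ⧸ Subgroup.upperCentralSeries G i,
      (z : G ⧸ Subgroup.upperCentralSeries G i) * q = q * (z : G ⧸ Subgroup.upperCentralSeries G i) := by
  intro q
  induction q using QuotientGroup.induction_on with
  | H w =>
    rw [← QuotientGroup.mk_mul, ← QuotientGroup.mk_mul]
    rw [QuotientGroup.eq]
    have h := mem_upperCentralSeries_succ_iff.mp
      ((Subgroup.upperCentralSeries G (i + 1)).inv_mem hz) w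
    have hconj := (inferInstance : (Subgroup.upperCentralSeries G i).Normal).conj_mem _ h w⁻¹
    have he : (z * w)⁻¹ * (w * z) = w⁻¹ * (z⁻¹ * w * z⁻¹⁻¹ * w⁻¹) * w⁻¹⁻¹ := by group
    rw [he]
    exact hconj

/-- pure group identity with centrality hypotheses. -/
private lemma central_comm_identity {Q : Type} [Group Q] (A B E Y : Q)
    (hE : ∀ q : Q, E * q = q * E)
    (hAY : ∀ q : Q, (A * Y * A⁻¹ * Y⁻¹) * q = q * (A * Y * A⁻¹ * Y⁻¹))
    (hBY : ∀ q : Q, (B * Y * B⁻¹ * Y⁻¹) * q = q * (B * Y * B⁻¹ * Y⁻¹)) :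
    (E * A * B) * Y * (E * A * B)⁻¹ * Y⁻¹ = (A * Y * A⁻¹ * Y⁻¹) * (B * Y * B⁻¹ * Y⁻¹) := by
  calc (E * A * B) * Y * (E * A * B)⁻¹ * Y⁻¹
      = E * (A * B * Y * B⁻¹ * A⁻¹) * E⁻¹ * Y⁻¹ := by group
    _ = (A * B * Y * B⁻¹ * A⁻¹) * E * E⁻¹ * Y⁻¹ := by rw [hE (A * B * Y * B⁻¹ * A⁻¹)]
    _ = (A * (B * Y * B⁻¹ * Y⁻¹)) * (Y * A⁻¹ * Y⁻¹) := by group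
    _ = ((B * Y * B⁻¹ * Y⁻¹) * A) * (Y * A⁻¹ * Y⁻¹) := by rw [← hBY A]
    _ = (B * Y * B⁻¹ * Y⁻¹) * (A * Y * A⁻¹ * Y⁻¹) := by group
    _ = (A * Y * A⁻¹ * Y⁻¹) * (B * Y * B⁻¹ * Y⁻¹) := (hAY _).symm

/-- the key descent lemma. -/
private lemma ucs_descent {H G : Type} [Group H] [Group G] (η : H →* G)
    (R : ∀ e : G →* G, e.comp η = η → ∀ x, e x = x) :
    ∀ (i : ℕ) (d : G → G),
      (∀ x, d x ∈ Subgroup.upperCentralSeries G (i + 1)) →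
      (∀ x y, d (x * y) * (d x * d y)⁻¹ ∈ Subgroup.upperCentralSeries G i) →
      (∀ h, d (η h) ∈ Subgroup.upperCentralSeries G i) →
      ∀ x, d x ∈ Subgroup.upperCentralSeries G i := by
  intro i
  induction i with
  | zero =>
    intro d hd1 hmul hη x
    have hexact : ∀ a b : G, d (a * b) = d a * d b := by
      intro a b
      have := hmul a b
      rw [upperCentralSeries_zero, Subgroup.mem_bot, mul_inv_eq_one] at this
      exact this
    have hone : d 1 = 1 := by
      have h := hexact 1 1
      rw [one_mul] at h
      have h2 : d 1 * 1 = d 1 * d 1 := by rw [mul_one]; exact h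
      exact (mul_left_cancel h2).symm
    have hcen : ∀ a : G, d a ∈ Subgroup.center G := by
      intro a
      have := hd1 a
      rwa [zero_add, upperCentralSeries_one] at this
    have hηone : ∀ h : H, d (η h) = 1 := by
      intro h
      have := hη h
      rwa [upperCentralSeries_zero, Subgroup.mem_bot] at this
    let e : G →* G :=
      { toFun := fun a => a * d a
        map_one' := by show (1 : G) * d 1 = 1; rw [hone, mul_one]
        map_mul' := by
          intro a b
          show (a * b) * d (a * b) = (a * d a) * (b * d b)
          have hcomm : b * d a = d a * b := Subgroup.mem_center_iff.mp (hcen a) b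
          calc (a * b) * d (a * b) = a * (b * d a) * d b := by rw [hexact]; group
            _ = a * (d a * b) * d b := by rw [hcomm]
            _ = (a * d a) * (b * d b) := by group }
    have hecomp : e.comp η = η := by
      ext h
      show η h * d (η h) = η h
      rw [hηone, mul_one]
    have hex := R e hecomp x
    have hdx : d x = 1 := by
      have h1 : x * d x = x * 1 := by rw [mul_one]; exact hex
      exact mul_left_cancel h1
    rw [upperCentralSeries_zero, Subgroup.mem_bot]
    exact hdx
  | succ i ih =>
    intro d hd1 hmul hη x
    rw [mem_upperCentralSeries_succ_iff]
    intro y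
    refine ih (fun a => d a * y * (d a)⁻¹ * y⁻¹) ?_ ?_ ?_ x
    · intro a
      exact mem_upperCentralSeries_succ_iff.mp (hd1 a) y
    · intro a b
      refine (QuotientGroup.eq_one_iff _).mp ?_
      have hεmem : d (a * b) * (d a * d b)⁻¹ ∈ Subgroup.upperCentralSeries G (i + 1) := hmul a b
      have hd' : d (a * b) = (d (a * b) * (d a * d b)⁻¹) * (d a * d b) := by group
      have hA1 : d a * y * (d a)⁻¹ * y⁻¹ ∈ Subgroup.upperCentralSeries G (i + 1) :=
        mem_upperCentralSeries_succ_iff.mp (hd1 a) y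
      have hB1 : d b * y * (d b)⁻¹ * y⁻¹ ∈ Subgroup.upperCentralSeries G (i + 1) :=
        mem_upperCentralSeries_succ_iff.mp (hd1 b) y
      have key := central_comm_identity
        (Q := G ⧸ Subgroup.upperCentralSeries G i)
        ((d a : G) : G ⧸ Subgroup.upperCentralSeries G i)
        ((d b : G) : G ⧸ Subgroup.upperCentralSeries G i)
        ((d (a * b) * (d a * d b)⁻¹ : G) : G ⧸ Subgroup.upperCentralSeries G i)
        ((y : G) : G ⧸ Subgroup.upperCentralSeries G i)
        (ucs_quot_central hεmem)
        (by
          intro q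
          have h := ucs_quot_central hA1 q
          simpa [QuotientGroup.mk_mul, QuotientGroup.mk_inv] using h)
        (by
          intro q
          have h := ucs_quot_central hB1 q
          simpa [QuotientGroup.mk_mul, QuotientGroup.mk_inv] using h)
      simp only [QuotientGroup.mk_mul, QuotientGroup.mk_inv]
      rw [mul_inv_eq_one]
      have hstep :
          ((d (a * b) : G) : G ⧸ Subgroup.upperCentralSeries G i) * (y : G)
              * ((d (a * b) : G) : G ⧸ Subgroup.upperCentralSeries G i)⁻¹
              * ((y : G) : G ⧸ Subgroup.upperCentralSeries G i)⁻¹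
            = (((d (a * b) * (d a * d b)⁻¹ : G) : G ⧸ Subgroup.upperCentralSeries G i)
                * ((d a : G) : G ⧸ Subgroup.upperCentralSeries G i)
                * ((d b : G) : G ⧸ Subgroup.upperCentralSeries G i)) * (y : G)
              * (((d (a * b) * (d a * d b)⁻¹ : G) : G ⧸ Subgroup.upperCentralSeries G i)
                * ((d a : G) : G ⧸ Subgroup.upperCentralSeries G i)
                * ((d b : G) : G ⧸ Subgroup.upperCentralSeries G i))⁻¹
              * ((y : G) : G ⧸ Subgroup.upperCentralSeries G i)⁻¹ := by
        conv_lhs => rw [hd']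
        simp only [QuotientGroup.mk_mul, QuotientGroup.mk_inv]
        group
      rw [hstep]
      exact key
    · intro h
      exact mem_upperCentralSeries_succ_iff.mp (hη h) y

/-- let η : H → G be an envelope (f ↦ f∘η maps End(G) onto Hom(H,G)
and every endomorphism of G fixing η is an automorphism) with G nilpotent.
Then η is a localization iff the Galois group of η is trivial. -/
theorem nilpotent_envelope_localization_iff_trivial_Galois
    {H G : Type} [Group H] [Group G] [Group.IsNilpotent G] (η : H →* G)
    (hsurj : Function.Surjective (fun f : G →* G => f.comp η))
    (henv : ∀ f : G →* G, f.comp η = η → Function.Bijective f) :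
    Function.Bijective (fun f : G →* G => f.comp η) ↔
      (∀ f : G ≃* G, f.toMonoidHom.comp η = η → f = MulEquiv.refl G) := by
  constructor
  · intro hbij f hf
    have h1 : f.toMonoidHom.comp η = (MonoidHom.id G).comp η := by
      rw [hf, MonoidHom.id_comp]
    have h2 : f.toMonoidHom = MonoidHom.id G := hbij.1 h1
    ext x
    exact DFunLike.congr_fun h2 x
  · intro hGal
    have R : ∀ e : G →* G, e.comp η = η → ∀ x, e x = x := by
      intro e he x
      have hb := henv e he
      have hcomp : (MulEquiv.ofBijective e hb).toMonoidHom.comp η = η := by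
        ext h
        show e (η h) = η h
        exact DFunLike.congr_fun he h
      have h2 := hGal (MulEquiv.ofBijective e hb) hcomp
      calc e x = (MulEquiv.ofBijective e hb) x := rfl
        _ = x := by rw [h2]; rfl
    refine ⟨?_, hsurj⟩
    intro f g hfg0
    have hfg : f.comp η = g.comp η := hfg0
    set d : G → G := fun x => (f x)⁻¹ * g x with hd
    have hηd : ∀ h : H, d (η h) = 1 := by
      intro h
      have hfh : f (η h) = g (η h) := DFunLike.congr_fun hfg h
      simp [hd, hfh]
    have hmulkey : ∀ (i : ℕ), (∀ x, d x ∈ Subgroup.upperCentralSeries G (i + 1)) →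
        ∀ a b : G, d (a * b) * (d a * d b)⁻¹ ∈ Subgroup.upperCentralSeries G i := by
      intro i hdi a b
      have he : d (a * b) * (d a * d b)⁻¹ = (f b)⁻¹ * d a * ((f b)⁻¹)⁻¹ * (d a)⁻¹ := by
        simp only [hd, map_mul]
        group
      rw [he]
      exact ucs_comm_mem' (hdi a) ((f b)⁻¹)
    have desc : ∀ i : ℕ, (∀ x, d x ∈ Subgroup.upperCentralSeries G i) →
        ∀ x, d x ∈ Subgroup.upperCentralSeries G 0 := by
      intro i
      induction i with
      | zero => exact fun h => h
      | succ i ih =>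
        intro hdi
        refine ih ?_
        refine ucs_descent η R i d hdi (hmulkey i hdi) ?_
        intro h
        rw [hηd h]
        exact (Subgroup.upperCentralSeries G i).one_mem
    obtain ⟨c, hc⟩ := Group.IsNilpotent.nilpotent G
    have hend : ∀ x, d x ∈ Subgroup.upperCentralSeries G 0 := by
      refine desc c ?_
      intro x
      rw [hc]
      exact Subgroup.mem_top _
    ext x
    have hx := hend x
    rw [upperCentralSeries_zero, Subgroup.mem_bot, hd] at hx
    exact inv_mul_eq_one.mp hx
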